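/- arXiv:1210.6721 — 2 statements merged into one kernel-verified Lean document; each statement's English description precedes it below -/
import Mathlib

section
/- Count of grid cubes inside a well shaped set: let m ≥ 1, let Ω ⊆ 𝕋_m be well shaped with constant C, and fix γ = (γ_1, …, γ_m) ∈ 𝕋_m. For a positive integer k, let 𝔠(k) be the collection of cubes of the form ∏_{j=1}^m [γ_j + u_j/k, γ_j + (u_j+1)/k] (taken modulo 1), u_1, …, u_m ∈ ℤ, and let C(k) be the set of cubes in 𝔠(k) that are contained in Ω. Then |#C(k) − k^m μ(Ω)| ≤ c k^{m−1}, where c depends only on m and C. -/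
open MeasureTheory

noncomputable section

abbrev Torus (m : ℕ) : Type := Fin m → AddCircle (1 : ℝ)

noncomputable def tmeas {m : ℕ} (Ω : Set (Torus m)) : ℝ := (volume Ω).toReal

noncomputable def torusDist {m : ℕ} (u w : Torus m) : ℝ :=
  Real.sqrt (∑ i, dist (u i) (w i) ^ 2)

noncomputable def torusDistSet {m : ℕ} (u : Torus m) (Ω : Set (Torus m)) : ℝ :=
  ⨅ w : Ω, torusDist u (w : Torus m)

def outerShell {m : ℕ} (Ω : Set (Torus m)) (ε : ℝ) : Set (Torus m) :=
  {u | u ∉ Ω ∧ torusDistSet u Ω < ε}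

def innerShell {m : ℕ} (Ω : Set (Torus m)) (ε : ℝ) : Set (Torus m) :=
  {u | u ∈ Ω ∧ torusDistSet u Ωᶜ < ε}

def IsWellShaped {m : ℕ} (Ω : Set (Torus m)) (C : ℝ) : Prop :=
  ∀ ε : ℝ, 0 < ε →
    tmeas (outerShell Ω ε) ≤ C * ε ∧ tmeas (innerShell Ω ε) ≤ C * ε

def IsVeryWellShaped {m : ℕ} (Ω : Set (Torus m)) (C : ℝ) : Prop :=
  ∀ ε : ℝ, 0 < ε →
    tmeas (outerShell Ω ε) ≤ C * (tmeas Ω ^ (1 - 1 / (m : ℝ)) * ε + ε ^ m) ∧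
    tmeas (innerShell Ω ε) ≤ C * (tmeas Ω ^ (1 - 1 / (m : ℝ)) * ε + ε ^ m)

noncomputable def discrepancy {ι : Type*} {n : ℕ} (s : Set ι) (ξ : ι → Fin n → ℝ) : ℝ :=
  if s.ncard = 0 then 1
  else
    ⨆ B : {B : (Fin n → ℝ) × (Fin n → ℝ) // ∀ j, 0 ≤ B.1 j ∧ B.1 j ≤ B.2 j ∧ B.2 j ≤ 1},
      |((s ∩ {k | ∀ j, B.val.1 j ≤ ξ k j ∧ ξ k j < B.val.2 j}).ncard : ℝ) / (s.ncard : ℝ)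
        - ∏ j, (B.val.2 j - B.val.1 j)|

noncomputable def torusPt (p : ℕ) {m : ℕ} (x : Fin m → Fin p) : Torus m :=
  fun i => ((((x i : ℕ) : ℝ) / (p : ℝ) : ℝ) : AddCircle (1 : ℝ))

noncomputable def fracPt {p m n : ℕ} (G : Fin n → MvPolynomial (Fin m) (ZMod p))
    (x : Fin m → ℤ) : Fin n → ℝ :=
  fun j => ((MvPolynomial.eval (fun i => ((x i : ℤ) : ZMod p)) (G j)).val : ℝ) / (p : ℝ)

def Degree2Independent {p m n : ℕ} (G : Fin n → MvPolynomial (Fin m) (ZMod p)) : Prop :=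
  ∀ a : Fin n → ZMod p, a ≠ 0 → 2 ≤ (∑ j, a j • G j).totalDegree

def torusIcc (a b : ℝ) : Set (AddCircle (1 : ℝ)) :=
  (fun r : ℝ => (r : AddCircle (1 : ℝ))) '' Set.Icc a b

def gridCube {m : ℕ} (γ : Fin m → ℝ) (k : ℕ) (u : Fin m → ℤ) : Set (Torus m) :=
  {t | ∀ i, t i ∈ torusIcc (γ i + (u i : ℝ) / k) (γ i + ((u i : ℝ) + 1) / k)}

def torusCube {m : ℕ} (γ : Fin m → ℝ) (s : ℝ) : Set (Torus m) :=
  {t | ∀ i, t i ∈ torusIcc (γ i) (γ i + s)}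

def cubesIn {m : ℕ} (Ω : Set (Torus m)) (γ : Fin m → ℝ) (k : ℕ) : Set (Set (Torus m)) :=
  {Γ | (∃ u : Fin m → ℤ, Γ = gridCube γ k u) ∧ Γ ⊆ Ω}

def dyadicB {m : ℕ} (Ω : Set (Torus m)) (γ : Fin m → ℝ) (i : ℕ) : Set (Set (Torus m)) :=
  if i = 1 then cubesIn Ω γ 2
  else {Γ | Γ ∈ cubesIn Ω γ (2 ^ i) ∧ ∀ Γ' ∈ cubesIn Ω γ (2 ^ (i - 1)), ¬ Γ ⊆ Γ'}

def polySolutions (p : ℕ) {m n : ℕ} (F : Fin n → MvPolynomial (Fin m) ℤ) :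
    Set (Fin m → Fin p) :=
  {x | ∀ j, ((MvPolynomial.eval (fun i => ((x i : ℕ) : ℤ)) (F j) : ℤ) : ZMod p) = 0}

noncomputable def Tcount (p : ℕ) {m n : ℕ} (F : Fin n → MvPolynomial (Fin m) ℤ)
    (S : Set (Torus m)) : ℕ :=
  (polySolutions p F ∩ {x | torusPt p x ∈ S}).ncard

end

section AuxWS

lemma ws_coe_eq_coe' {y z : ℝ} (h : (y : AddCircle (1:ℝ)) = z) : ∃ n : ℤ, z = y + n := by
  rw [QuotientAddGroup.eq_iff_sub_mem, AddSubgroup.mem_zmultiples_iff] at h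
  obtain ⟨n, hn⟩ := h
  rw [zsmul_eq_mul, mul_one] at hn
  exact ⟨-n, by push_cast; linarith⟩

lemma ws_coe_eq_coe'' {y z : ℝ} (n : ℤ) (h : z = y + n) : (y : AddCircle (1:ℝ)) = z := by
  rw [QuotientAddGroup.eq_iff_sub_mem, AddSubgroup.mem_zmultiples_iff]
  exact ⟨-n, by rw [zsmul_eq_mul, mul_one]; push_cast; linarith⟩

lemma ws_vol_singleton (x : AddCircle (1:ℝ)) : volume ({x} : Set (AddCircle (1:ℝ))) = 0 := by
  induction x using QuotientAddGroup.induction_on with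
  | _ c =>
  have hm := (AddCircle.measurePreserving_mk 1 0)
  rw [← hm.measure_preimage (measurableSet_singleton _).nullMeasurableSet]
  refine measure_mono_null (fun y hy => ?_) (le_antisymm (le_trans (Measure.restrict_le_self _)
    ((Set.countable_range (fun n : ℤ => c + (n:ℝ))).measure_zero _).le) zero_le)
  simp only [Set.mem_preimage, Set.mem_singleton_iff] at hy
  obtain ⟨n, hn⟩ := ws_coe_eq_coe' hy
  exact ⟨-n, by push_cast; linarith⟩

instance ws_prob : IsProbabilityMeasure (volume : Measure (AddCircle (1:ℝ))) :=
  ⟨by rw [AddCircle.measure_univ]; simp⟩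

lemma ws_torusIcc_measurableSet (a b : ℝ) : MeasurableSet (torusIcc a b) :=
  (isCompact_Icc.image (AddCircle.continuous_mk' 1)).measurableSet

lemma ws_arcVol (a s : ℝ) (h0 : 0 ≤ s) (h1 : s ≤ 1) :
    volume (torusIcc a (a + s)) = ENNReal.ofReal s := by
  have hm := AddCircle.measurePreserving_mk 1 a
  rw [← hm.measure_preimage (ws_torusIcc_measurableSet _ _).nullMeasurableSet]
  have hms : MeasurableSet (((↑) : ℝ → AddCircle (1:ℝ)) ⁻¹' torusIcc a (a+s)) :=
    (AddCircle.measurable_mk' ) (ws_torusIcc_measurableSet _ _)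
  rw [Measure.restrict_apply hms]
  have hset : ((↑) : ℝ → AddCircle (1:ℝ)) ⁻¹' torusIcc a (a+s) ∩ Set.Ioc a (a+1)
      = Set.Ioc a (a+s) ∪ {a+1} := by
    ext x
    constructor
    · rintro ⟨hx1, hx2⟩
      obtain ⟨y, hy, hyx⟩ := hx1
      obtain ⟨n, hn⟩ := ws_coe_eq_coe' hyx
      have hn0 : (-1:ℝ) < (n:ℝ) := by linarith [hy.2, hx2.1]
      have hn1 : (n:ℝ) ≤ 1 := by linarith [hy.1, hx2.2]
      have : n = 0 ∨ n = 1 := by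
        have h0' : (-1:ℤ) < n := by exact_mod_cast hn0
        have h1' : n ≤ 1 := by exact_mod_cast hn1
        omega
      rcases this with rfl | rfl
      · left; push_cast at hn; exact ⟨hx2.1, by linarith [hy.2]⟩
      · right; push_cast at hn
        have : x = a + 1 := le_antisymm hx2.2 (by linarith [hy.1])
        simp [this]
    · rintro (hx | hx)
      · exact ⟨⟨x, ⟨hx.1.le, hx.2⟩, rfl⟩, hx.1, by linarith [hx.2]⟩
      · simp only [Set.mem_singleton_iff] at hx
        subst hx
        exact ⟨⟨a, ⟨le_refl a, by linarith⟩, ws_coe_eq_coe'' 1 (by push_cast; ring)⟩,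
          by constructor <;> simp⟩
  rw [hset]
  rw [le_antisymm ((measure_union_le _ _).trans (by simp)) (measure_mono Set.subset_union_left)]
  rw [Real.volume_Ioc]
  congr 1
  ring

lemma ws_torusIcc_shift (a b : ℝ) (n : ℤ) : torusIcc (a + n) (b + n) = torusIcc a b := by
  ext x
  simp only [torusIcc, Set.mem_image]
  constructor
  · rintro ⟨y, hy, rfl⟩
    exact ⟨y - n, ⟨by linarith [hy.1], by linarith [hy.2]⟩, ws_coe_eq_coe'' n (by ring)⟩
  · rintro ⟨y, hy, rfl⟩
    exact ⟨y + n, ⟨by linarith [hy.1], by linarith [hy.2]⟩, ws_coe_eq_coe'' (-n) (by push_cast; ring)⟩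

lemma ws_dist_arc {c d : ℝ} {z₁ z₂ : AddCircle (1:ℝ)} (h₁ : z₁ ∈ torusIcc c (c+d))
    (h₂ : z₂ ∈ torusIcc c (c+d)) : dist z₁ z₂ ≤ d := by
  obtain ⟨t, ht, rfl⟩ := h₁
  obtain ⟨s, hs, rfl⟩ := h₂
  have h3 : dist ((t : AddCircle (1:ℝ))) (s : AddCircle (1:ℝ)) ≤ |t - s| := by
    rw [dist_eq_norm, ← AddCircle.coe_sub]
    simpa using QuotientAddGroup.norm_mk_le_norm (S := AddSubgroup.zmultiples (1:ℝ)) (m := t - s)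
  refine h3.trans (abs_le.mpr ⟨by linarith [ht.1, hs.2], by linarith [ht.2, hs.1]⟩)

lemma ws_exists_rep (c : ℝ) (z : AddCircle (1:ℝ)) :
    ∃ y : ℝ, 0 ≤ y ∧ y < 1 ∧ ((c + y : ℝ) : AddCircle (1:ℝ)) = z := by
  induction z using QuotientAddGroup.induction_on with
  | _ x =>
  refine ⟨Int.fract (x - c), Int.fract_nonneg _, Int.fract_lt_one _, ?_⟩
  apply ws_coe_eq_coe'' ⌊x - c⌋
  rw [Int.fract]
  ring

lemma ws_arc_pair {γ : ℝ} {k a b : ℕ} (hk : 0 < k) (ha : a < k) (hb : b < k) (hab : a ≠ b) :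
    torusIcc (γ + (a:ℝ)/k) (γ + ((a:ℝ)+1)/k) ∩ torusIcc (γ + (b:ℝ)/k) (γ + ((b:ℝ)+1)/k) ⊆
      {((γ + (a:ℝ)/k : ℝ) : AddCircle (1:ℝ)), ((γ + ((a:ℝ)+1)/k : ℝ) : AddCircle (1:ℝ))} := by
  rintro x ⟨⟨t, ht, rfl⟩, ⟨s, hs, hst⟩⟩
  obtain ⟨n, hn⟩ := ws_coe_eq_coe' hst
  have hk' : (0:ℝ) < k := by exact_mod_cast hk
  have hk0 : (0:ℤ) < (k:ℤ) := by exact_mod_cast hk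
  have haZ : (a:ℤ) < k := by exact_mod_cast ha
  have hbZ : (b:ℤ) < k := by exact_mod_cast hb
  have habZ : (a:ℤ) ≠ b := by exact_mod_cast hab
  -- clear denominators
  have ht1 : (a:ℝ) ≤ (t - γ)*k := by
    rw [← div_le_iff₀ hk']; linarith [ht.1]
  have ht2 : (t - γ)*k ≤ (a:ℝ)+1 := by
    rw [← le_div_iff₀ hk']; linarith [ht.2]
  have hs1 : (b:ℝ) ≤ (s - γ)*k := by
    rw [← div_le_iff₀ hk']; linarith [hs.1]
  have hs2 : (s - γ)*k ≤ (b:ℝ)+1 := by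
    rw [← le_div_iff₀ hk']; linarith [hs.2]
  have hn' : (t - γ)*k = (s - γ)*k + (n:ℝ)*k := by rw [hn]; ring
  have hubR : (n:ℝ) * k ≤ (a:ℝ) - b + 1 := by linarith
  have hlbR : (a:ℝ) - b - 1 ≤ (n:ℝ) * k := by linarith
  have hub' : n * (k:ℤ) ≤ (a:ℤ) - b + 1 := by exact_mod_cast hubR
  have hlb' : (a:ℤ) - b - 1 ≤ n * (k:ℤ) := by exact_mod_cast hlbR
  have hne : (a:ℤ) - b ≠ n * k := by
    intro h
    rcases lt_trichotomy n 0 with h' | h' | h'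
    · have h3 : n * (k:ℤ) ≤ (-1) * k := mul_le_mul_of_nonneg_right (by omega) (by omega)
      omega
    · subst h'; omega
    · have h3 : (1:ℤ) * k ≤ n * k := mul_le_mul_of_nonneg_right (by omega) (by omega)
      omega
  have he : (a:ℤ) - b - n*k = 1 ∨ (a:ℤ) - b - n*k = -1 := by
    rcases hne.lt_or_gt with h' | h'
    · right; omega
    · left; omega
  rcases he with he | he
  · -- left endpoint
    have hcast : (n:ℝ)*k = (a:ℝ) - b - 1 := by exact_mod_cast (by linarith : n*(k:ℤ) = (a:ℤ) - b - 1)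
    have hta : (t - γ)*k = (a:ℝ) := le_antisymm (by linarith) ht1
    have ht' : t = γ + (a:ℝ)/k := by
      have h4 : (a:ℝ)/k = t - γ := by rw [div_eq_iff hk'.ne']; linarith
      linarith
    rw [ht']
    exact Set.mem_insert _ _
  · -- right endpoint
    have hcast : (n:ℝ)*k = (a:ℝ) - b + 1 := by exact_mod_cast (by linarith : n*(k:ℤ) = (a:ℤ) - b + 1)
    have hta : (t - γ)*k = (a:ℝ) + 1 := le_antisymm ht2 (by linarith)
    have ht' : t = γ + ((a:ℝ)+1)/k := by
      have h4 : ((a:ℝ)+1)/k = t - γ := by rw [div_eq_iff hk'.ne']; linarith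
      linarith
    rw [ht']
    exact Set.mem_insert_of_mem _ rfl

end AuxWS

section AuxWS2

open Set

lemma ws_gridCube_pi {m : ℕ} (γ : Fin m → ℝ) (k : ℕ) (u : Fin m → ℤ) :
    gridCube γ k u = Set.pi Set.univ
      (fun i => torusIcc (γ i + (u i : ℝ)/k) (γ i + ((u i : ℝ)+1)/k)) := by
  ext t
  simp [gridCube, Set.mem_univ_pi]

lemma ws_gridCube_measurable {m : ℕ} (γ : Fin m → ℝ) (k : ℕ) (u : Fin m → ℤ) :
    MeasurableSet (gridCube γ k u) := by
  rw [ws_gridCube_pi]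
  exact MeasurableSet.univ_pi fun i => ws_torusIcc_measurableSet _ _

lemma ws_gridCube_vol {m : ℕ} (γ : Fin m → ℝ) (k : ℕ) (hk : 0 < k) (u : Fin m → ℤ) :
    volume (gridCube γ k u) = ENNReal.ofReal (1/(k:ℝ)) ^ m := by
  have hk' : (0:ℝ) < k := by exact_mod_cast hk
  rw [ws_gridCube_pi, volume_pi_pi]
  have harc : ∀ i, volume (torusIcc (γ i + (u i:ℝ)/k) (γ i + ((u i:ℝ)+1)/k))
      = ENNReal.ofReal (1/(k:ℝ)) := by
    intro i
    rw [show γ i + ((u i:ℝ)+1)/k = (γ i + (u i:ℝ)/k) + 1/(k:ℝ) by ring]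
    refine ws_arcVol _ _ (by positivity) ?_
    rw [div_le_one hk']
    exact_mod_cast hk
  simp [harc]

lemma ws_gridCube_mod {m : ℕ} (γ : Fin m → ℝ) (k : ℕ) (hk : 0 < k) (u : Fin m → ℤ) :
    gridCube γ k (fun i => u i % (k:ℤ)) = gridCube γ k u := by
  have hk' : (k:ℝ) ≠ 0 := by positivity
  have hpt : ∀ i, torusIcc (γ i + ((u i % (k:ℤ) : ℤ):ℝ)/k) (γ i + (((u i % (k:ℤ) : ℤ):ℝ)+1)/k)
      = torusIcc (γ i + (u i:ℝ)/k) (γ i + ((u i:ℝ)+1)/k) := by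
    intro i
    have h := Int.emod_add_mul_ediv (u i) (k:ℤ)
    have hr : (u i : ℝ) = ((u i % (k:ℤ) : ℤ):ℝ) + (k:ℝ) * ((u i / (k:ℤ) : ℤ):ℝ) := by
      exact_mod_cast h.symm
    have h1 : γ i + (u i:ℝ)/k = (γ i + ((u i % (k:ℤ) : ℤ):ℝ)/k) + ((u i / (k:ℤ) : ℤ):ℝ) := by
      rw [hr]; field_simp; ring
    have h2 : γ i + ((u i:ℝ)+1)/k
        = (γ i + (((u i % (k:ℤ) : ℤ):ℝ)+1)/k) + ((u i / (k:ℤ) : ℤ):ℝ) := by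
      rw [hr]; field_simp; ring
    rw [h1, h2]
    exact (ws_torusIcc_shift _ _ _).symm
  ext t
  simp only [gridCube, Set.mem_setOf_eq]
  exact forall_congr' fun i => by rw [hpt i]

lemma ws_cube_diam {m : ℕ} {γ : Fin m → ℝ} {k : ℕ} {u : Fin m → ℤ}
    {x w : Torus m} (hx : x ∈ gridCube γ k u) (hw : w ∈ gridCube γ k u) :
    torusDist x w ≤ Real.sqrt m * (1/(k:ℝ)) := by
  have hco : ∀ i, dist (x i) (w i) ≤ 1/(k:ℝ) := by
    intro i
    have h1 := hx i
    have h2 := hw i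
    rw [show γ i + ((u i:ℝ)+1)/k = (γ i + (u i:ℝ)/k) + 1/(k:ℝ) by ring] at h1 h2
    exact ws_dist_arc h1 h2
  have hsum : ∑ i, dist (x i) (w i)^2 ≤ (m:ℝ) * (1/(k:ℝ))^2 := by
    calc ∑ i, dist (x i) (w i)^2 ≤ ∑ _i : Fin m, (1/(k:ℝ))^2 :=
        Finset.sum_le_sum fun i _ => pow_le_pow_left₀ dist_nonneg (hco i) 2
      _ = (m:ℝ) * (1/(k:ℝ))^2 := by
        rw [Finset.sum_const, Finset.card_univ, Fintype.card_fin, nsmul_eq_mul]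
  calc torusDist x w ≤ Real.sqrt ((m:ℝ)*(1/(k:ℝ))^2) := Real.sqrt_le_sqrt hsum
    _ = Real.sqrt m * (1/(k:ℝ)) := by
        rw [Real.sqrt_mul (Nat.cast_nonneg m), Real.sqrt_sq (by positivity)]

lemma ws_arc_cover (c : ℝ) {k : ℕ} (hk : 0 < k) (z : AddCircle (1:ℝ)) :
    ∃ j : ℕ, j < k ∧ z ∈ torusIcc (c + (j:ℝ)/k) (c + ((j:ℝ)+1)/k) := by
  obtain ⟨y, hy0, hy1, hyz⟩ := ws_exists_rep c z
  have hk' : (0:ℝ) < k := by exact_mod_cast hk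
  have hfl0 : 0 ≤ ⌊(k:ℝ)*y⌋ := Int.floor_nonneg.mpr (by positivity)
  have hflk : ⌊(k:ℝ)*y⌋ < (k:ℤ) := Int.floor_lt.mpr (by push_cast; nlinarith)
  have hcst : ((⌊(k:ℝ)*y⌋.toNat : ℕ):ℝ) = ((⌊(k:ℝ)*y⌋ : ℤ):ℝ) := by
    exact_mod_cast congrArg (Int.cast : ℤ → ℝ) (Int.toNat_of_nonneg hfl0)
  refine ⟨⌊(k:ℝ)*y⌋.toNat, by omega, ⟨c + y, ⟨?_, ?_⟩, hyz⟩⟩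
  · rw [hcst]
    have h2 : ((⌊(k:ℝ)*y⌋ : ℤ):ℝ)/k ≤ y := by
      rw [div_le_iff₀ hk']
      have := Int.floor_le ((k:ℝ)*y)
      linarith
    linarith
  · rw [hcst]
    have h2 : y ≤ (((⌊(k:ℝ)*y⌋ : ℤ):ℝ)+1)/k := by
      rw [le_div_iff₀ hk']
      have := Int.lt_floor_add_one ((k:ℝ)*y)
      linarith
    linarith

def wsFc {m : ℕ} (γ : Fin m → ℝ) (k : ℕ) (v : Fin m → Fin k) : Set (Torus m) :=
  gridCube γ k (fun i => ((v i : ℕ) : ℤ))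

lemma ws_mem_wsFc {m : ℕ} {γ : Fin m → ℝ} {k : ℕ} {v : Fin m → Fin k} {x : Torus m} :
    x ∈ wsFc γ k v ↔ ∀ i, x i ∈
      torusIcc (γ i + ((v i : ℕ):ℝ)/k) (γ i + (((v i : ℕ):ℝ)+1)/k) := by
  simp [wsFc, gridCube]

end AuxWS2

/-- Count of grid cubes of side `1/k` (anchored at `γ`) contained in a well shaped set:
`|#C(k) − k^m μ(Ω)| ≤ c k^{m−1}` with `c = c(m,C)`. -/
theorem cubesIn_count_well_shaped (m : ℕ) (hm : 1 ≤ m) (C : ℝ) :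
    ∃ c : ℝ, 0 < c ∧
      ∀ Ω : Set (Torus m), IsWellShaped Ω C → ∀ γ : Fin m → ℝ, ∀ k : ℕ, 0 < k →
        |((cubesIn Ω γ k).ncard : ℝ) - (k : ℝ) ^ m * tmeas Ω| ≤ c * (k : ℝ) ^ (m - 1) := by
  classical
  refine ⟨|C| * (Real.sqrt m + 1) + 1, by positivity, ?_⟩
  intro Ω hΩ γ k hk
  have hk' : (0:ℝ) < k := by exact_mod_cast hk
  have hε : 0 < (Real.sqrt m + 1) * (1/(k:ℝ)) := by positivity
  -- basic cube facts
  have hvol : ∀ v : Fin m → Fin k, volume (wsFc γ k v) = ENNReal.ofReal (1/(k:ℝ)) ^ m :=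
    fun v => ws_gridCube_vol γ k hk _
  have hdisj : ∀ v w : Fin m → Fin k, v ≠ w → volume (wsFc γ k v ∩ wsFc γ k w) = 0 := by
    intro v w hvw
    obtain ⟨i, hi⟩ := Function.ne_iff.mp hvw
    have hsub : wsFc γ k v ∩ wsFc γ k w ⊆ Function.eval i ⁻¹'
        ((torusIcc (γ i + ((v i : ℕ):ℝ)/k) (γ i + (((v i : ℕ):ℝ)+1)/k)) ∩
         (torusIcc (γ i + ((w i : ℕ):ℝ)/k) (γ i + (((w i : ℕ):ℝ)+1)/k))) := by
      rintro t ⟨h1, h2⟩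
      exact ⟨ws_mem_wsFc.mp h1 i, ws_mem_wsFc.mp h2 i⟩
    have hvw' : (v i : ℕ) ≠ (w i : ℕ) := fun h => hi (Fin.ext h)
    refine measure_mono_null
      (hsub.trans (Set.preimage_mono (ws_arc_pair hk (v i).isLt (w i).isLt hvw'))) ?_
    rw [volume_pi]
    apply MeasureTheory.Measure.pi_eval_preimage_null
    rw [Set.insert_eq]
    exact measure_union_null (ws_vol_singleton _) (ws_vol_singleton _)
  have hcube_ne : (ENNReal.ofReal (1/(k:ℝ)))^m ≠ 0 := by
    apply pow_ne_zero
    simp only [ne_eq, ENNReal.ofReal_eq_zero, not_le]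
    positivity
  have hinj : Function.Injective (wsFc γ k) := by
    intro v w h
    by_contra hvw
    have h0 := hdisj v w hvw
    rw [h, Set.inter_self, hvol] at h0
    exact hcube_ne h0
  set 𝒮 : Set (Fin m → Fin k) := {v | wsFc γ k v ⊆ Ω} with h𝒮
  have hfin : 𝒮.Finite := Set.toFinite _
  have hCeq : cubesIn Ω γ k = wsFc γ k '' 𝒮 := by
    ext Γ
    constructor
    · rintro ⟨⟨u, rfl⟩, hsub⟩
      have hkz : (0:ℤ) < (k:ℤ) := by exact_mod_cast hk
      have hmod : ∀ i, 0 ≤ u i % (k:ℤ) ∧ u i % (k:ℤ) < (k:ℤ) :=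
        fun i => ⟨Int.emod_nonneg _ (by omega), Int.emod_lt_of_pos _ hkz⟩
      have hlt : ∀ i, (u i % (k:ℤ)).toNat < k := by
        intro i
        have := hmod i
        omega
      have hfe : wsFc γ k (fun i => ⟨(u i % (k:ℤ)).toNat, hlt i⟩) = gridCube γ k u := by
        unfold wsFc
        have harg : (fun i => (((u i % (k:ℤ)).toNat : ℕ):ℤ)) = (fun i => u i % (k:ℤ)) :=
          funext fun i => Int.toNat_of_nonneg (hmod i).1
        rw [show (fun i => (((fun i => (⟨(u i % (k:ℤ)).toNat, hlt i⟩ : Fin k)) i : ℕ) : ℤ))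
            = (fun i => u i % (k:ℤ)) from harg]
        exact ws_gridCube_mod γ k hk u
      exact ⟨fun i => ⟨(u i % (k:ℤ)).toNat, hlt i⟩, by rw [h𝒮, Set.mem_setOf_eq, hfe]; exact hsub, hfe⟩
    · rintro ⟨v, hv, rfl⟩
      exact ⟨⟨fun i => ((v i : ℕ) : ℤ), rfl⟩, hv⟩
  have hncard : (cubesIn Ω γ k).ncard = hfin.toFinset.card := by
    rw [hCeq, Set.ncard_image_of_injective _ hinj, Set.ncard_eq_toFinset_card _ hfin]
  have hUnion : volume (⋃ v ∈ hfin.toFinset, wsFc γ k v)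
      = (hfin.toFinset.card : ENNReal) * ENNReal.ofReal (1/(k:ℝ)) ^ m := by
    rw [measure_biUnion_finset₀ (fun a _ b _ hab => hdisj a b hab)
      (fun v _ => (ws_gridCube_measurable γ k _).nullMeasurableSet)]
    simp [hvol, Finset.sum_const]
  have hUsub : (⋃ v ∈ hfin.toFinset, wsFc γ k v) ⊆ Ω :=
    Set.iUnion₂_subset fun v hv => hfin.mem_toFinset.mp hv
  have hcover : Ω ⊆ (⋃ v ∈ hfin.toFinset, wsFc γ k v)
      ∪ innerShell Ω ((Real.sqrt m + 1) * (1/(k:ℝ))) := by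
    intro x hx
    obtain ⟨v, hv⟩ : ∃ v : Fin m → Fin k, x ∈ wsFc γ k v := by
      choose j hjk hmem using fun i => ws_arc_cover (γ i) hk (x i)
      exact ⟨fun i => ⟨j i, hjk i⟩, ws_mem_wsFc.mpr fun i => hmem i⟩
    by_cases hvΩ : wsFc γ k v ⊆ Ω
    · exact Or.inl (Set.mem_biUnion (hfin.mem_toFinset.mpr hvΩ) hv)
    · refine Or.inr ⟨hx, ?_⟩
      obtain ⟨w, hw1, hw2⟩ := Set.not_subset.mp hvΩ
      have hbdd : BddBelow (Set.range fun w' : (Ωᶜ : Set (Torus m)) =>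
          torusDist x (w' : Torus m)) := by
        refine ⟨0, ?_⟩
        rintro r ⟨w', rfl⟩
        exact Real.sqrt_nonneg _
      have h1 : torusDistSet x Ωᶜ ≤ torusDist x w :=
        ciInf_le hbdd (⟨w, hw2⟩ : (Ωᶜ : Set (Torus m)))
      have h2 := ws_cube_diam hv hw1
      have h3 : Real.sqrt m * (1/(k:ℝ)) < (Real.sqrt m + 1) * (1/(k:ℝ)) := by
        have hKp : (0:ℝ) < 1/(k:ℝ) := by positivity
        nlinarith
      exact lt_of_le_of_lt (h1.trans h2) h3
  have hXne : (hfin.toFinset.card : ENNReal) * ENNReal.ofReal (1/(k:ℝ)) ^ m ≠ ⊤ :=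
    ENNReal.mul_ne_top (ENNReal.natCast_ne_top _) (ENNReal.pow_ne_top ENNReal.ofReal_ne_top)
  have hX : ((hfin.toFinset.card : ENNReal) * ENNReal.ofReal (1/(k:ℝ)) ^ m).toReal
      = (hfin.toFinset.card : ℝ) * (1/(k:ℝ))^m := by
    rw [ENNReal.toReal_mul, ENNReal.toReal_pow, ENNReal.toReal_natCast,
      ENNReal.toReal_ofReal (by positivity)]
  have ineq1 : (hfin.toFinset.card : ℝ) * (1/(k:ℝ))^m ≤ tmeas Ω := by
    have h := measure_mono (μ := (volume : Measure (Torus m))) hUsub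
    rw [hUnion] at h
    calc (hfin.toFinset.card : ℝ) * (1/(k:ℝ))^m = _ := hX.symm
      _ ≤ (volume Ω).toReal := ENNReal.toReal_mono (measure_ne_top _ _) h
  have ineq2 : tmeas Ω ≤ (hfin.toFinset.card : ℝ) * (1/(k:ℝ))^m
      + C * ((Real.sqrt m + 1) * (1/(k:ℝ))) := by
    have h1 : volume Ω ≤ (hfin.toFinset.card : ENNReal) * ENNReal.ofReal (1/(k:ℝ)) ^ m
        + volume (innerShell Ω ((Real.sqrt m + 1) * (1/(k:ℝ)))) := by
      calc volume Ω ≤ volume ((⋃ v ∈ hfin.toFinset, wsFc γ k v)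
            ∪ innerShell Ω ((Real.sqrt m + 1) * (1/(k:ℝ)))) := measure_mono hcover
        _ ≤ volume (⋃ v ∈ hfin.toFinset, wsFc γ k v)
            + volume (innerShell Ω ((Real.sqrt m + 1) * (1/(k:ℝ)))) := measure_union_le _ _
        _ = (hfin.toFinset.card : ENNReal) * ENNReal.ofReal (1/(k:ℝ)) ^ m
            + volume (innerShell Ω ((Real.sqrt m + 1) * (1/(k:ℝ)))) := by rw [hUnion]
    have h2 := ENNReal.toReal_mono (ENNReal.add_ne_top.mpr ⟨hXne, measure_ne_top _ _⟩) h1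
    rw [ENNReal.toReal_add hXne (measure_ne_top _ _), hX] at h2
    have h3 := (hΩ _ hε).2
    unfold tmeas at h3 ⊢
    linarith
  rw [hncard]
  have e1 : (k:ℝ)^m * (1/(k:ℝ))^m = 1 := by
    rw [← mul_pow]
    simp [hk'.ne']
  have e2 : (k:ℝ)^m * (1/(k:ℝ)) = (k:ℝ)^(m-1) := by
    conv_lhs => rw [show m = (m-1)+1 from (Nat.succ_pred_eq_of_pos hm).symm]
    rw [pow_succ]
    field_simp
  have hkm1 : (0:ℝ) ≤ (k:ℝ)^(m-1) := by positivity
  have hkmpos : (0:ℝ) ≤ (k:ℝ)^m := by positivity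
  have h4 : (hfin.toFinset.card:ℝ) ≤ (k:ℝ)^m * tmeas Ω := by
    calc (hfin.toFinset.card:ℝ)
        = (hfin.toFinset.card:ℝ) * ((k:ℝ)^m * (1/(k:ℝ))^m) := by rw [e1, mul_one]
      _ = (k:ℝ)^m * ((hfin.toFinset.card:ℝ) * (1/(k:ℝ))^m) := by ring
      _ ≤ (k:ℝ)^m * tmeas Ω := mul_le_mul_of_nonneg_left ineq1 hkmpos
  have h5 : (k:ℝ)^m * tmeas Ω
      ≤ (hfin.toFinset.card:ℝ) + C * (Real.sqrt m + 1) * (k:ℝ)^(m-1) := by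
    calc (k:ℝ)^m * tmeas Ω
        ≤ (k:ℝ)^m * ((hfin.toFinset.card : ℝ) * (1/(k:ℝ))^m
            + C * ((Real.sqrt m + 1) * (1/(k:ℝ)))) := mul_le_mul_of_nonneg_left ineq2 hkmpos
      _ = (hfin.toFinset.card:ℝ) * ((k:ℝ)^m * (1/(k:ℝ))^m)
            + C * (Real.sqrt m + 1) * ((k:ℝ)^m * (1/(k:ℝ))) := by ring
      _ = (hfin.toFinset.card:ℝ) + C * (Real.sqrt m + 1) * (k:ℝ)^(m-1) := by
            rw [e1, e2, mul_one]
  have hCabs : C * (Real.sqrt m + 1) * (k:ℝ)^(m-1) ≤ |C| * (Real.sqrt m + 1) * (k:ℝ)^(m-1) := by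
    have h6 : C ≤ |C| := le_abs_self C
    have h7 : (0:ℝ) ≤ (Real.sqrt m + 1) * (k:ℝ)^(m-1) := by positivity
    nlinarith
  have hcpos' : (0:ℝ) ≤ (|C| * (Real.sqrt m + 1) + 1) * (k:ℝ)^(m-1) := by positivity
  rw [abs_le]
  constructor
  · have h8 : (|C| * (Real.sqrt m + 1)) * (k:ℝ)^(m-1)
        ≤ (|C| * (Real.sqrt m + 1) + 1) * (k:ℝ)^(m-1) := by nlinarith
    linarith
  · linarith
end

section
/- Dyadic cube approximation of a very well shaped set: let m ≥ 1, let Ω ⊆ 𝕋_m be very well shaped with constant C, and fix γ ∈ 𝕋_m. For a positive integer k let C(k) be the set of cubes of the form ∏_{j=1}^m [γ_j + u_j/k, γ_j + (u_j+1)/k] (taken modulo 1, u ∈ ℤ^m) that are contained in Ω; let B_1 = C(2) and, for i ≥ 2, let B_i be the set of cubes in C(2^i) not contained in any cube of C(2^{i−1}). Then for every integer M ≥ 1, |μ(⋃_{i=1}^{M} ⋃_{Γ ∈ B_i} Γ) − μ(Ω)| ≤ c (μ(Ω)^{(m−1)/m} 2^{−M} + 2^{−Mm}), where c depends only on m and C.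 -/
open MeasureTheory

-- auxiliary lemmas

lemma addCircle_exists_rep (x : AddCircle (1:ℝ)) (a : ℝ) :
    ∃ r : ℝ, r ∈ Set.Ico a (a+1) ∧ (r : AddCircle (1:ℝ)) = x := by
  induction x using QuotientAddGroup.induction_on with
  | H b =>
    refine ⟨toIcoMod one_pos a b, toIcoMod_mem_Ico one_pos a b, ?_⟩
    rw [← self_sub_toIcoDiv_zsmul one_pos a b]
    push_cast [AddCircle.coe_sub]
    simp [AddCircle.coe_zsmul]

lemma addCircle_dist_le (s t : ℝ) :
    dist ((s : AddCircle (1:ℝ))) (t : AddCircle (1:ℝ)) ≤ |s - t| := by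
  rw [dist_eq_norm, ← AddCircle.coe_sub, ← Real.norm_eq_abs]
  exact QuotientAddGroup.norm_mk_le_norm

lemma exists_gridCube {m : ℕ} (γ : Fin m → ℝ) (k : ℕ) (hk : 0 < k) (x : Torus m) :
    ∃ u : Fin m → ℤ, x ∈ gridCube γ k u := by
  have h : ∀ i, ∃ v : ℤ, x i ∈ torusIcc (γ i + (v : ℝ)/k) (γ i + ((v : ℝ)+1)/k) := by
    intro i
    obtain ⟨r, hr, hrx⟩ := addCircle_exists_rep (x i) (γ i)
    have hk' : (0:ℝ) < (k:ℝ) := by exact_mod_cast hk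
    set y := (r - γ i) * k with hy
    refine ⟨⌊y⌋, ⟨r, ⟨?_, ?_⟩, hrx⟩⟩
    · have h1 : (⌊y⌋ : ℝ) ≤ y := Int.floor_le y
      have : (⌊y⌋ : ℝ)/k ≤ r - γ i := by
        rw [div_le_iff₀ hk']; linarith
      linarith
    · have h2 : y ≤ (⌊y⌋ : ℝ) + 1 := (Int.lt_floor_add_one y).le
      have : r - γ i ≤ ((⌊y⌋ : ℝ)+1)/k := by
        rw [le_div_iff₀ hk']; linarith
      linarith
  choose u hu using h
  exact ⟨u, hu⟩

lemma dist_of_mem_gridCube {m : ℕ} {γ : Fin m → ℝ} {k : ℕ} (hk : 0 < k)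
    {u : Fin m → ℤ} {x y : Torus m} (hx : x ∈ gridCube γ k u) (hy : y ∈ gridCube γ k u) :
    torusDist x y ≤ Real.sqrt m / k := by
  have hk' : (0:ℝ) < (k:ℝ) := by exact_mod_cast hk
  have hterm : ∀ i, dist (x i) (y i) ^ 2 ≤ (1/(k:ℝ))^2 := by
    intro i
    obtain ⟨s, hs, hsx⟩ := hx i
    obtain ⟨t, ht, hty⟩ := hy i
    have hd : dist (x i) (y i) ≤ |s - t| := by
      rw [← hsx, ← hty]; exact addCircle_dist_le s t
    have hst : |s - t| ≤ 1/(k:ℝ) := by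
      rw [abs_sub_le_iff]
      obtain ⟨hs1, hs2⟩ := hs
      obtain ⟨ht1, ht2⟩ := ht
      have key : ((u i : ℝ)+1)/k - (u i : ℝ)/k = 1/(k:ℝ) := by
        field_simp
        ring
      constructor <;> linarith
    have h0 : (0:ℝ) ≤ dist (x i) (y i) := dist_nonneg
    nlinarith
  have hsum : ∑ i, dist (x i) (y i) ^ 2 ≤ (m:ℝ) * (1/(k:ℝ))^2 := by
    calc ∑ i, dist (x i) (y i) ^ 2 ≤ ∑ _i : Fin m, (1/(k:ℝ))^2 :=
          Finset.sum_le_sum fun i _ => hterm i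
      _ = (m:ℝ) * (1/(k:ℝ))^2 := by simp [mul_comm]
  have : torusDist x y ≤ Real.sqrt ((m:ℝ) * (1/(k:ℝ))^2) :=
    Real.sqrt_le_sqrt hsum
  refine this.trans_eq ?_
  rw [Real.sqrt_mul (by positivity), Real.sqrt_sq (by positivity)]
  rw [one_div, div_eq_mul_inv]

lemma cube_subset_biUnion {m : ℕ} (Ω : Set (Torus m)) (γ : Fin m → ℝ) (M : ℕ) :
    ∀ i, 1 ≤ i → i ≤ M → ∀ Γ ∈ cubesIn Ω γ (2 ^ i),
      Γ ⊆ ⋃ j ∈ Finset.Icc 1 M, ⋃₀ dyadicB Ω γ j := by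
  intro i
  induction i with
  | zero => intro h; omega
  | succ n ih =>
    intro _ hle Γ hΓ
    rcases Nat.eq_zero_or_pos n with hn | hn
    · subst hn
      have hΓ' : Γ ∈ dyadicB Ω γ 1 := by
        rw [dyadicB, if_pos rfl]
        simpa [pow_one] using hΓ
      intro x hx
      exact Set.mem_biUnion (Finset.mem_Icc.mpr ⟨le_refl 1, hle⟩)
        (Set.mem_sUnion.mpr ⟨Γ, hΓ', hx⟩)
    · by_cases hB : Γ ∈ dyadicB Ω γ (n + 1)
      · intro x hx
        exact Set.mem_biUnion (Finset.mem_Icc.mpr ⟨by omega, hle⟩)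
          (Set.mem_sUnion.mpr ⟨Γ, hB, hx⟩)
      · rw [dyadicB, if_neg (by omega)] at hB
        simp only [Set.mem_setOf_eq, not_and, not_forall, not_not, exists_prop] at hB
        obtain ⟨Γ', hΓ', hsub⟩ := hB hΓ
        simp only [Nat.add_sub_cancel] at hΓ'
        exact hsub.trans (ih hn (by omega) Γ' hΓ')

lemma dyadicB_subset {m : ℕ} (Ω : Set (Torus m)) (γ : Fin m → ℝ) (i : ℕ) (hi : 1 ≤ i)
    (Γ : Set (Torus m)) (hΓ : Γ ∈ dyadicB Ω γ i) : Γ ⊆ Ω := by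
  rcases eq_or_ne i 1 with h1 | h1
  · rw [h1, dyadicB, if_pos rfl] at hΓ
    exact hΓ.2
  · rw [dyadicB, if_neg h1] at hΓ
    exact hΓ.1.2


/-- Dyadic cube approximation of a very well shaped set:
`|μ(⋃_{i≤M} ⋃_{Γ ∈ B_i} Γ) − μ(Ω)| ≤ c (μ(Ω)^{(m−1)/m} 2^{−M} + 2^{−Mm})`
with `c = c(m,C)`. -/
theorem dyadic_approximation_very_well_shaped (m : ℕ) (hm : 1 ≤ m) (C : ℝ) :
    ∃ c : ℝ, 0 < c ∧
      ∀ Ω : Set (Torus m), IsVeryWellShaped Ω C → ∀ γ : Fin m → ℝ, ∀ M : ℕ, 1 ≤ M →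
        |tmeas (⋃ i ∈ Finset.Icc 1 M, ⋃₀ dyadicB Ω γ i) - tmeas Ω|
          ≤ c * (tmeas Ω ^ (((m : ℝ) - 1) / (m : ℝ)) * ((2 : ℝ) ^ M)⁻¹
              + ((2 : ℝ) ^ (M * m))⁻¹) := by
  have hm0 : (m : ℝ) ≠ 0 := Nat.cast_ne_zero.mpr (by omega)
  set s : ℝ := Real.sqrt m + 1 with hs
  have hs1 : 1 ≤ s := by rw [hs]; have := Real.sqrt_nonneg (m : ℝ); linarith
  refine ⟨(|C| + 1) * s ^ m, by positivity, ?_⟩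
  intro Ω hΩ γ M hM
  set U := ⋃ i ∈ Finset.Icc 1 M, ⋃₀ dyadicB Ω γ i with hU
  have hUΩ : U ⊆ Ω := by
    intro x hx
    simp only [hU, Set.mem_iUnion, Set.mem_sUnion] at hx
    obtain ⟨i, hi, Γ, hΓ, hxΓ⟩ := hx
    exact dyadicB_subset Ω γ i (Finset.mem_Icc.mp hi).1 Γ hΓ hxΓ
  set ε : ℝ := s * ((2 : ℝ) ^ M)⁻¹ with hε
  have hεpos : 0 < ε := by positivity
  have hshell : Ω \ U ⊆ innerShell Ω ε := by
    rintro x ⟨hxΩ, hxU⟩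
    refine ⟨hxΩ, ?_⟩
    by_contra hge
    push_neg at hge
    obtain ⟨u, hu⟩ := exists_gridCube γ (2 ^ M) (by positivity) x
    have hcube : gridCube γ (2 ^ M) u ⊆ Ω := by
      intro y hy
      by_contra hyΩ
      have hbdd : BddBelow (Set.range fun w : ↥(Ωᶜ) => torusDist x (w : Torus m)) :=
        ⟨0, by rintro z ⟨w, rfl⟩; exact Real.sqrt_nonneg _⟩
      have hle : torusDistSet x Ωᶜ ≤ torusDist x y := ciInf_le hbdd ⟨y, hyΩ⟩
      have hd : torusDist x y ≤ Real.sqrt m / ((2 ^ M : ℕ) : ℝ) :=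
        dist_of_mem_gridCube (by positivity) hu hy
      push_cast at hd
      have hlt : Real.sqrt m / ((2:ℝ) ^ M) < ε := by
        rw [hε, div_eq_mul_inv]
        have h2 : (0:ℝ) < ((2:ℝ) ^ M)⁻¹ := by positivity
        nlinarith
      linarith
    exact hxU (cube_subset_biUnion Ω γ M M hM le_rfl _ ⟨⟨u, rfl⟩, hcube⟩ hu)
  have hfin : ∀ S : Set (Torus m), volume S ≠ ⊤ := fun S => measure_ne_top _ _
  have h1 : tmeas U ≤ tmeas Ω := ENNReal.toReal_mono (hfin Ω) (measure_mono hUΩ)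
  have h2 : tmeas Ω ≤ tmeas U + tmeas (innerShell Ω ε) := by
    have hsub : Ω ⊆ U ∪ innerShell Ω ε := fun x hx =>
      (em (x ∈ U)).elim Or.inl fun hxU => Or.inr (hshell ⟨hx, hxU⟩)
    have hmono := (measure_mono hsub).trans (measure_union_le (μ := volume) U (innerShell Ω ε))
    have := ENNReal.toReal_mono (ENNReal.add_ne_top.mpr ⟨hfin _, hfin _⟩) hmono
    rwa [ENNReal.toReal_add (hfin _) (hfin _)] at this
  have h3 := (hΩ ε hεpos).2
  have hA : 0 ≤ tmeas Ω ^ (1 - 1 / (m : ℝ)) := Real.rpow_nonneg ENNReal.toReal_nonneg _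
  have hexp : tmeas Ω ^ (((m : ℝ) - 1) / (m : ℝ)) = tmeas Ω ^ (1 - 1 / (m : ℝ)) := by
    congr 1
    field_simp
  rw [abs_sub_comm, abs_of_nonneg (by linarith), hexp]
  set A := tmeas Ω ^ (1 - 1 / (m : ℝ)) with hA'
  have hP : (0:ℝ) < ((2:ℝ) ^ M)⁻¹ := by positivity
  have hQ : (0:ℝ) < ((2:ℝ) ^ (M * m))⁻¹ := by positivity
  have hεm : ε ^ m = s ^ m * ((2:ℝ) ^ (M * m))⁻¹ := by
    rw [hε, mul_pow, inv_pow, ← pow_mul]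
  have hsm : s ≤ s ^ m := le_self_pow₀ hs1 (by omega)
  have hC : C ≤ |C| := le_abs_self C
  have habs : (0:ℝ) ≤ |C| := abs_nonneg C
  calc tmeas Ω - tmeas U ≤ tmeas (innerShell Ω ε) := by linarith
    _ ≤ C * (A * ε + ε ^ m) := h3
    _ ≤ (|C| + 1) * s ^ m * (A * ((2:ℝ) ^ M)⁻¹ + ((2:ℝ) ^ (M * m))⁻¹) := by
        rw [hεm, hε]
        have h3' : (0:ℝ) ≤ s := zero_le_one.trans hs1
        nlinarith [mul_nonneg (sub_nonneg.mpr hC)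
            (add_nonneg (mul_nonneg (mul_nonneg hA h3') hP.le)
              (mul_nonneg (pow_nonneg h3' m) hQ.le)),
          mul_nonneg habs (mul_nonneg (mul_nonneg hA hP.le) (sub_nonneg.mpr hsm)),
          mul_nonneg (pow_nonneg h3' m) (add_nonneg (mul_nonneg hA hP.le) hQ.le)]
end
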